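/- Let 0 < a < b be real numbers. Then the function f(x) = x / √((b² − x²)(x² − a²)) is convex on the open interval (a, b). -/

import Mathlib

open Set

theorem density_convex_on_component
    (a b : ℝ) (ha : 0 < a) (hab : a < b) :
    ConvexOn ℝ (Ioo a b)
      (fun x : ℝ => x / Real.sqrt ((b ^ 2 - x ^ 2) * (x ^ 2 - a ^ 2))) := by
  set f : ℝ → ℝ := fun x : ℝ => x / Real.sqrt ((b ^ 2 - x ^ 2) * (x ^ 2 - a ^ 2)) with hf_def
  set g : ℝ → ℝ := fun x : ℝ => (b ^ 2 - x ^ 2) * (x ^ 2 - a ^ 2) with hg_def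
  set G' : ℝ → ℝ := fun x : ℝ => 2 * x * (a ^ 2 + b ^ 2) - 4 * x ^ 3 with hG'_def
  set G'' : ℝ → ℝ := fun x : ℝ => 2 * (a ^ 2 + b ^ 2) - 12 * x ^ 2 with hG''_def
  set F1 : ℝ → ℝ := fun x : ℝ =>
    (g x - x * G' x / 2) / (Real.sqrt (g x) * g x) with hF1_def
  -- basic facts on Ioo
  have hgpos : ∀ x ∈ Ioo a b, 0 < g x := by
    intro x hx
    have h1 : a < x := hx.1
    have h2 : x < b := hx.2
    have : 0 < x := lt_trans ha h1
    apply mul_pos <;> nlinarith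
  have hgd : ∀ x : ℝ, HasDerivAt g (G' x) x := by
    intro x
    have hx2 : HasDerivAt (fun y : ℝ => y ^ 2) (2 * x) x := by
      simpa using hasDerivAt_pow 2 x
    have h := ((hasDerivAt_const x (b ^ 2)).sub hx2).mul
      (hx2.sub (hasDerivAt_const x (a ^ 2)))
    refine h.congr_deriv ?_
    simp [hG'_def]; ring
  have hG'd : ∀ x : ℝ, HasDerivAt G' (G'' x) x := by
    intro x
    have h := (((hasDerivAt_id x).const_mul 2).mul_const (a ^ 2 + b ^ 2)).sub
      ((hasDerivAt_pow 3 x).const_mul 4)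
    refine h.congr_deriv ?_
    simp [hG''_def]; ring
  have key : ∀ x ∈ Ioo a b, HasDerivAt f (F1 x) x := by
    intro x hx
    have hg0 : 0 < g x := hgpos x hx
    have hs0 : 0 < Real.sqrt (g x) := Real.sqrt_pos.mpr hg0
    have hs2 : Real.sqrt (g x) ^ 2 = g x := Real.sq_sqrt hg0.le
    have hS : HasDerivAt (fun y => Real.sqrt (g y)) (G' x / (2 * Real.sqrt (g x))) x :=
      (hgd x).sqrt hg0.ne'
    have hdiv : HasDerivAt f
        ((1 * Real.sqrt (g x) - x * (G' x / (2 * Real.sqrt (g x)))) / (Real.sqrt (g x)) ^ 2) x :=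
      (hasDerivAt_id x).div hS hs0.ne'
    convert hdiv using 1
    rw [hF1_def]
    rw [div_eq_div_iff (by positivity) (by positivity)]
    field_simp
    rw [hs2]; ring
  -- second derivative
  set D : ℝ → ℝ := fun x : ℝ =>
    ((G' x - (1 * G' x + x * G'' x) / 2) * (Real.sqrt (g x) * g x)
      - (g x - x * G' x / 2) *
        (G' x / (2 * Real.sqrt (g x)) * g x + Real.sqrt (g x) * G' x))
      / (Real.sqrt (g x) * g x) ^ 2 with hD_def
  have keyD : ∀ x ∈ Ioo a b, HasDerivAt F1 (D x) x := by
    intro x hx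
    have hg0 : 0 < g x := hgpos x hx
    have hs0 : 0 < Real.sqrt (g x) := Real.sqrt_pos.mpr hg0
    have hS : HasDerivAt (fun y => Real.sqrt (g y)) (G' x / (2 * Real.sqrt (g x))) x :=
      (hgd x).sqrt hg0.ne'
    have hnum : HasDerivAt (fun y => g y - y * G' y / 2)
        (G' x - (1 * G' x + x * G'' x) / 2) x :=
      (hgd x).sub (((hasDerivAt_id x).mul (hG'd x)).div_const 2)
    have hden : HasDerivAt (fun y => Real.sqrt (g y) * g y)
        (G' x / (2 * Real.sqrt (g x)) * g x + Real.sqrt (g x) * G' x) x :=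
      hS.mul (hgd x)
    exact hnum.div hden (by positivity)
  have hDnonneg : ∀ x ∈ Ioo a b, 0 ≤ D x := by
    intro x hx
    have hg0 : 0 < g x := hgpos x hx
    have hs0 : 0 < Real.sqrt (g x) := Real.sqrt_pos.mpr hg0
    have hs2 : Real.sqrt (g x) ^ 2 = g x := Real.sq_sqrt hg0.le
    have hx0 : 0 ≤ x := le_of_lt (lt_trans ha hx.1)
    have hu : 0 ≤ x ^ 2 - a ^ 2 := by nlinarith [hx.1]
    have hw : 0 ≤ b ^ 2 - x ^ 2 := by nlinarith [hx.2]
    have hQ : 0 ≤ a ^ 2 * (3 * (b ^ 2 - x ^ 2) ^ 2 - 2 * (x ^ 2 - a ^ 2) * (b ^ 2 - x ^ 2)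
          + 3 * (x ^ 2 - a ^ 2) ^ 2)
        + (x ^ 2 - a ^ 2) ^ 2 * (b ^ 2 - x ^ 2) + 3 * (x ^ 2 - a ^ 2) ^ 3 := by
      nlinarith [sq_nonneg (a * ((x ^ 2 - a ^ 2) - (b ^ 2 - x ^ 2))),
        mul_nonneg (sq_nonneg a) (sq_nonneg (x ^ 2 - a ^ 2)),
        mul_nonneg (sq_nonneg a) (sq_nonneg (b ^ 2 - x ^ 2)),
        mul_nonneg (sq_nonneg (x ^ 2 - a ^ 2)) hw,
        mul_nonneg (mul_nonneg hu hu) hu]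
    simp only [hD_def]
    set s := Real.sqrt (g x) with hs_def
    rw [← hs2]
    apply div_nonneg _ (sq_nonneg _)
    have hES : (G' x - (1 * G' x + x * G'' x) / 2) * (s * s ^ 2)
          - (s ^ 2 - x * G' x / 2) * (G' x / (2 * s) * s ^ 2 + s * G' x)
        = s * ((G' x - (1 * G' x + x * G'' x) / 2) * s ^ 2
            - 3 / 2 * (s ^ 2 - x * G' x / 2) * G' x) := by
      field_simp
      ring
    rw [hES]
    apply mul_nonneg hs0.le
    rw [hs2]
    have hfac : (G' x - (1 * G' x + x * G'' x) / 2) * g x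
          - 3 / 2 * (g x - x * G' x / 2) * G' x
        = x * (a ^ 2 * (3 * (b ^ 2 - x ^ 2) ^ 2 - 2 * (x ^ 2 - a ^ 2) * (b ^ 2 - x ^ 2)
              + 3 * (x ^ 2 - a ^ 2) ^ 2)
            + (x ^ 2 - a ^ 2) ^ 2 * (b ^ 2 - x ^ 2) + 3 * (x ^ 2 - a ^ 2) ^ 3) := by
      simp only [hg_def, hG'_def, hG''_def]
      ring
    rw [hfac]
    exact mul_nonneg hx0 hQ
  -- assemble
  have hopen : ∀ x ∈ Ioo a b, deriv f =ᶠ[nhds x] F1 := by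
    intro x hx
    filter_upwards [isOpen_Ioo.mem_nhds hx] with y hy
    exact (key y hy).deriv
  apply convexOn_of_deriv2_nonneg (convex_Ioo a b)
  · intro x hx
    exact (key x hx).differentiableAt.continuousAt.continuousWithinAt
  · rw [interior_Ioo]
    intro x hx
    exact (key x hx).differentiableAt.differentiableWithinAt
  · rw [interior_Ioo]
    intro x hx
    exact ((keyD x hx).differentiableAt.congr_of_eventuallyEq
      (hopen x hx)).differentiableWithinAt
  · rw [interior_Ioo]
    intro x hx
    have h2 : deriv^[2] f x = deriv (deriv f) x := rfl
    rw [h2, (hopen x hx).deriv_eq, (keyD x hx).deriv]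
    exact hDnonneg x hx
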